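/- arXiv:1811.09142 — 5 statements merged into one kernel-verified Lean document; each statement's English description precedes it below -/
import Mathlib

section
/- Let A_1, ..., A_s be subsets of a finite set, each of size r+1, such that |A_i ∩ A_j| ≤ 1 for all i ≠ j. If |A_1 ∪ ... ∪ A_s| ≤ sr, then the graph on vertex set {1,...,s} with an edge {i,j} whenever A_i ∩ A_j ≠ ∅ has at least s edges, and hence contains a cycle. -/
open Finset SimpleGraph Walk

/-- Inclusion-exclusion lower bound for a union of finite sets. -/
lemma union_lower_bound {α : Type*} [DecidableEq α] {ι : Type*} [DecidableEq ι]
    (A : ι → Finset α) :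
    ∀ t : Finset ι, 2 * ∑ i ∈ t, (A i).card ≤
      2 * (t.biUnion A).card + ∑ p ∈ t.offDiag, (A p.1 ∩ A p.2).card := by
  classical
  intro t
  induction t using Finset.induction_on with
  | empty => simp
  | @insert a t ha ih =>
    have hbU : (insert a t).biUnion A = A a ∪ t.biUnion A := Finset.biUnion_insert
    have hcardU : (A a ∪ t.biUnion A).card + (A a ∩ t.biUnion A).card
        = (A a).card + (t.biUnion A).card := Finset.card_union_add_card_inter _ _
    have hinter : (A a ∩ t.biUnion A).card ≤ ∑ i ∈ t, (A a ∩ A i).card := by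
      rw [Finset.inter_biUnion]
      exact Finset.card_biUnion_le
    have hd1 : Disjoint (t.offDiag ∪ {a} ×ˢ t) (t ×ˢ {a}) := by
      rw [Finset.disjoint_left]
      rintro ⟨i, j⟩ hij hij'
      obtain ⟨hit, hja⟩ := Finset.mem_product.mp hij'
      simp only [Finset.mem_singleton] at hja
      subst hja
      rcases Finset.mem_union.mp hij with hh | hh
      · exact ha (Finset.mem_offDiag.mp hh).2.1
      · have := (Finset.mem_product.mp hh).1
        simp only [Finset.mem_singleton] at this
        exact ha (this ▸ hit)
    have hd2 : Disjoint t.offDiag ({a} ×ˢ t) := by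
      rw [Finset.disjoint_left]
      rintro ⟨i, j⟩ hij hij'
      have h1 := (Finset.mem_offDiag.mp hij).1
      have h2 := (Finset.mem_product.mp hij').1
      simp only [Finset.mem_singleton] at h2
      exact ha (h2 ▸ h1)
    have hoff : ∑ p ∈ (insert a t).offDiag, (A p.1 ∩ A p.2).card
        = ∑ p ∈ t.offDiag, (A p.1 ∩ A p.2).card
          + (∑ i ∈ t, (A a ∩ A i).card + ∑ i ∈ t, (A i ∩ A a).card) := by
      rw [Finset.offDiag_insert ha, Finset.sum_union hd1, Finset.sum_union hd2,
        Finset.sum_product, Finset.sum_product, Finset.sum_singleton]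
      simp [add_assoc]
    have hcomm : ∑ i ∈ t, (A i ∩ A a).card = ∑ i ∈ t, (A a ∩ A i).card := by
      apply Finset.sum_congr rfl
      intro i _
      rw [Finset.inter_comm]
    rw [Finset.sum_insert ha, hbU, hoff, hcomm]
    omega

/-- An acyclic graph on a finite nonempty vertex type has fewer edges than vertices. -/
lemma forest_card_edge_lt {V : Type*} [Fintype V] [Nonempty V] (G : SimpleGraph V)
    [Fintype G.edgeSet] (h : G.IsAcyclic) : G.edgeFinset.card < Fintype.card V := by
  classical
  -- root of each vertex's connected component
  let root : V → V := fun v => (G.connectedComponentMk v).out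
  have hreach : ∀ v, G.Reachable v (root v) := fun v =>
    SimpleGraph.ConnectedComponent.exact (Quot.out_eq (G.connectedComponentMk v)).symm
  have hrootadj : ∀ {x y : V}, G.Adj x y → root x = root y := by
    intro x y hxy
    simp only [root]
    rw [SimpleGraph.ConnectedComponent.sound hxy.reachable]
  have hrootroot : ∀ v, root (root v) = root v := by
    intro v
    simp only [root]
    congr 1
    exact Quot.out_eq _
  have hexists : ∀ v, ∃ p : G.Walk v (root v), p.IsPath :=
    fun v => ⟨(hreach v).some.toPath.1, (hreach v).some.toPath.2⟩
  choose f hf using hexists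
  have hf' : ∀ v (p : G.Walk v (root v)), p.IsPath → p = f v := by
    intro v p hp
    exact congrArg Subtype.val (h.path_unique ⟨p, hp⟩ ⟨f v, hf v⟩)
  -- the set of non-root vertices
  set S : Finset V := Finset.univ.filter (fun v => v ≠ root v) with hS
  have hcard : G.edgeFinset.card = S.card := by
    refine Eq.symm <| Finset.card_bij
      (fun w hw => ((f w).firstDart <| not_nil_of_ne
        (by simpa [hS] using hw)).edge)
      (fun a ha => ?_) ?_ ?_
    · exact mem_edgeFinset.mpr (Dart.edge_mem _)
    · intro a ha b hb heq
      by_contra hne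
      wlog h' : (f a).length ≤ (f b).length generalizing a b
      · exact this b hb a ha heq.symm (Ne.symm hne) (le_of_not_ge h')
      rw [dart_edge_eq_iff] at heq
      obtain (heq | heq) := heq
      · exact hne (congrArg (·.fst) heq)
      · have h1 : ((f a).firstDart <| not_nil_of_ne (by simpa [hS] using ha)).snd = b :=
          congrArg (·.snd) heq
        have hadj : G.Adj a b := by
          have := ((f a).firstDart <| not_nil_of_ne (by simpa [hS] using ha)).adj
          rwa [h1] at this
        have hab : root a = root b := hrootadj hadj
        have h3 := congrArg Walk.length (hf' b ((f a).tail.copy (show (f a).snd = b from h1) hab) ?_)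
        · rw [Walk.length_copy, ← add_left_inj 1,
            Walk.length_tail_add_one (not_nil_of_ne (by simpa [hS] using ha))] at h3
          omega
        · simp only [Walk.isPath_copy]
          exact (hf a).tail
    · simp only [mem_edgeFinset, Sym2.forall, SimpleGraph.mem_edgeSet]
      intro x y hxy
      wlog h' : (f x).length ≤ (f y).length generalizing x y
      · obtain ⟨w, hw, he⟩ := this y x hxy.symm (le_of_not_ge h')
        exact ⟨w, hw, by rwa [Sym2.eq_swap] at he⟩
      have hab : root x = root y := hrootadj hxy
      have hyS : y ∈ S := by
        simp only [hS, Finset.mem_filter, Finset.mem_univ, true_and]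
        intro hyroot
        have hfx : ((Walk.cons hxy Walk.nil).copy rfl (hab.trans hyroot.symm).symm) = f x :=
          hf' x _ (by simp [hxy.ne])
        have hfy : ((Walk.nil : G.Walk y y).copy rfl hyroot) = f y :=
          hf' y _ (by simp)
        have l1 := congrArg Walk.length hfx
        have l2 := congrArg Walk.length hfy
        simp at l1 l2
        omega
      refine ⟨y, hyS, ?_⟩
      have hne : ¬ (f y).Nil := not_nil_of_ne (by simpa [hS] using hyS)
      have key : ((Walk.cons hxy.symm (f x)).copy rfl hab) = f y := by
        apply hf'
        simp only [Walk.isPath_copy]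
        rw [Walk.cons_isPath_iff]
        refine ⟨hf x, fun hy => ?_⟩
        have htake : (f x).takeUntil y hy = Walk.cons hxy Walk.nil := by
          have := h.path_unique ⟨(f x).takeUntil y hy, (hf x).takeUntil hy⟩
            ⟨Walk.cons hxy Walk.nil, by simp [hxy.ne]⟩
          exact congrArg Subtype.val this
        have hspec := (f x).take_spec hy
        have hdrop : ((f x).dropUntil y hy).copy rfl hab = f y :=
          hf' y _ (by simp only [Walk.isPath_copy]; exact (hf x).dropUntil hy)
        have l1 := congrArg Walk.length hspec
        rw [Walk.length_append, htake] at l1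
        have l2 := congrArg Walk.length hdrop
        rw [Walk.length_copy] at l2
        simp at l1
        omega
      have hgv : (f y).getVert 1 = x := by
        rw [← key]
        simp [Walk.getVert_copy]
      rw [Walk.edge_firstDart, Walk.snd, hgv, Sym2.eq_swap]
  have hroot_notin : (root (Classical.arbitrary V)) ∉ S := by
    simp [hS, hrootroot]
  calc G.edgeFinset.card = S.card := hcard
    _ < Finset.univ.card := Finset.card_lt_card ⟨Finset.subset_univ S,
        fun hsub => hroot_notin (hsub (Finset.mem_univ _))⟩
    _ = Fintype.card V := Finset.card_univ

/-- If `A_1, ..., A_s` each have size `r+1`, pairwise intersections of size at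
most 1, and their union has size at most `s*r`, then the intersection graph has
at least `s` edges and contains a cycle. -/
theorem stmt_5 {α : Type*} [DecidableEq α] (r s : ℕ) (hr : 0 < r) (hs : 0 < s)
    (A : Fin s → Finset α)
    (hcard : ∀ i, (A i).card = r + 1)
    (hpair : ∀ i j, i ≠ j → (A i ∩ A j).card ≤ 1)
    (hunion : (Finset.univ.biUnion A).card ≤ s * r)
    (G : SimpleGraph (Fin s)) [Fintype G.edgeSet]
    (hG : ∀ i j, G.Adj i j ↔ i ≠ j ∧ (A i ∩ A j).Nonempty) :
    s ≤ G.edgeFinset.card ∧ ∃ (v : Fin s) (w : G.Walk v v), w.IsCycle := by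
  classical
  have hmain := union_lower_bound A Finset.univ
  have hsum : ∑ i ∈ (Finset.univ : Finset (Fin s)), (A i).card = s * (r + 1) := by
    rw [Finset.sum_congr rfl (fun i _ => hcard i)]
    simp [Finset.card_univ, mul_comm]
  have hP : ∑ p ∈ (Finset.univ : Finset (Fin s)).offDiag, (A p.1 ∩ A p.2).card
      ≤ 2 * G.edgeFinset.card := by
    have hDec : DecidableRel G.Adj := Classical.decRel _
    have h2 := @SimpleGraph.two_mul_card_edgeFinset _ G _ hDec
    have h3 : (@SimpleGraph.edgeFinset _ G G.fintypeEdgeSet).card = G.edgeFinset.card := by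
      simp only [edgeFinset, Set.toFinset_card]
      congr!
    calc ∑ p ∈ (Finset.univ : Finset (Fin s)).offDiag, (A p.1 ∩ A p.2).card
        ≤ ∑ p ∈ (Finset.univ : Finset (Fin s)).offDiag,
            (if G.Adj p.1 p.2 then 1 else 0) := by
          apply Finset.sum_le_sum
          rintro ⟨i, j⟩ hij
          have hij' : i ≠ j := (Finset.mem_offDiag.mp hij).2.2
          by_cases hne : (A i ∩ A j).Nonempty
          · rw [if_pos ((hG i j).mpr ⟨hij', hne⟩)]
            exact hpair i j hij'
          · rw [Finset.not_nonempty_iff_eq_empty] at hne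
            simp [hne]
      _ ≤ ∑ p ∈ (Finset.univ : Finset (Fin s × Fin s)),
            (if G.Adj p.1 p.2 then 1 else 0) :=
          Finset.sum_le_sum_of_subset (Finset.subset_univ _)
      _ = (Finset.univ.filter fun p : Fin s × Fin s => G.Adj p.1 p.2).card := by
          rw [Finset.card_eq_sum_ones, Finset.sum_filter]
      _ = (Finset.univ.filter fun (x, y) => G.Adj x y).card := by
          apply congrArg
          apply Finset.filter_congr
          rintro ⟨x, y⟩ _
          rfl
      _ = 2 * (@SimpleGraph.edgeFinset _ G G.fintypeEdgeSet).card := h2.symm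
      _ = 2 * G.edgeFinset.card := by rw [h3]
  have hedges : s ≤ G.edgeFinset.card := by
    have h1 : 2 * (s * (r + 1)) ≤ 2 * (s * r) + 2 * G.edgeFinset.card := by
      calc 2 * (s * (r + 1)) = 2 * ∑ i ∈ (Finset.univ : Finset (Fin s)), (A i).card := by
            rw [hsum]
        _ ≤ 2 * ((Finset.univ.biUnion A).card)
            + ∑ p ∈ (Finset.univ : Finset (Fin s)).offDiag, (A p.1 ∩ A p.2).card := hmain
        _ ≤ 2 * (s * r) + 2 * G.edgeFinset.card := by
            have := hunion
            omega
    nlinarith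
  refine ⟨hedges, ?_⟩
  by_contra hcyc
  push_neg at hcyc
  have hacyclic : G.IsAcyclic := fun v w hw => hcyc v w hw
  have : Nonempty (Fin s) := ⟨⟨0, hs⟩⟩
  have := forest_card_edge_lt G hacyclic
  rw [Fintype.card_fin] at this
  omega
end

section
/- Let q be a prime power, F_q the field with q elements, d ≥ 5, r ≥ d-2, m a positive integer, and A_1, ..., A_m subsets of F_q each of size r+1, with A_i = {a_{i,1}, ..., a_{i,r+1}}. Form the (m + d - 2) × m(r+1) matrix H over F_q whose column indexed by (i,j) is the concatenation of the i-th standard basis vector e_i ∈ F_q^m with the vector (a_{i,j}, a_{i,j}^2, ..., a_{i,j}^{d-2}). Then any d-1 columns of H are linearly independent if and only if for every subset S ⊆ {1,...,m} with |S| ≤ ⌊(d-1)/2⌋, the union ∪_{i∈S} A_i has size at least r|S| + 1. -/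
open Finset

set_option linter.unusedSectionVars false
set_option linter.unusedVariables false

namespace Stmt6Aux

variable {F : Type*} [Field F] [Fintype F] [DecidableEq F] {m n : ℕ}

def gsum (c : Fin m × Fin n → F) (i : Fin m) : F :=
  ∑ p ∈ univ.filter (fun p : Fin m × Fin n => p.1 = i), c p

def vsum (a : Fin m → Fin n → F) (c : Fin m × Fin n → F) (x : F) : F :=
  ∑ p ∈ univ.filter (fun p : Fin m × Fin n => a p.1 p.2 = x), c p

/-- Extension by zero of a coefficient vector on `Q`. -/
def extz (Q : Finset (Fin m × Fin n)) : ({p // p ∈ Q} → F) →ₗ[F] ((Fin m × Fin n) → F) where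
  toFun z := fun p => if h : p ∈ Q then z ⟨p, h⟩ else 0
  map_add' z w := by funext p; by_cases h : p ∈ Q <;> simp [h]
  map_smul' t z := by funext p; by_cases h : p ∈ Q <;> simp [h]

@[simp] lemma extz_apply (Q : Finset (Fin m × Fin n)) (z : {p // p ∈ Q} → F)
    (p : Fin m × Fin n) : extz Q z p = if h : p ∈ Q then z ⟨p, h⟩ else 0 := rfl

lemma sum_extz_filter (Q : Finset (Fin m × Fin n)) (z : {p // p ∈ Q} → F)
    (Pr : Fin m × Fin n → Prop) [DecidablePred Pr] :
    ∑ p ∈ univ.filter Pr, extz Q z p = ∑ p : {p // p ∈ Q}, if Pr p.1 then z p else 0 := by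
  rw [sum_filter]
  rw [← Finset.sum_subset (subset_univ Q)
    (fun p _ hp => by simp [extz_apply, hp])]
  rw [← Finset.sum_coe_sort Q (fun p => if Pr p then extz Q z p else 0)]
  exact sum_congr rfl fun p _ => by simp [extz_apply, p.2]

lemma sum_extz_mul (Q : Finset (Fin m × Fin n)) (z : {p // p ∈ Q} → F)
    (f : Fin m × Fin n → F) :
    ∑ p, extz Q z p * f p = ∑ p : {p // p ∈ Q}, z p * f p.1 := by
  rw [← Finset.sum_subset (subset_univ Q)
    (fun p _ hp => by simp [extz_apply, hp])]
  rw [← Finset.sum_coe_sort Q (fun p => extz Q z p * f p)]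
  exact sum_congr rfl fun p _ => by simp [extz_apply, p.2]

/-- The linear map collecting group sums (over `G`) and value sums (over `W`). -/
def psi (a : Fin m → Fin n → F) (Q : Finset (Fin m × Fin n)) (G : Finset (Fin m))
    (W : Finset F) :
    ({p // p ∈ Q} → F) →ₗ[F] (({i // i ∈ G} ⊕ {x // x ∈ W}) → F) where
  toFun z := Sum.elim
    (fun i => ∑ p : {p // p ∈ Q}, if p.1.1 = i.1 then z p else 0)
    (fun x => ∑ p : {p // p ∈ Q}, if a p.1.1 p.1.2 = x.1 then z p else 0)
  map_add' z w := by
    funext s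
    cases s <;>
    · simp only [Sum.elim_inl, Sum.elim_inr, Pi.add_apply, ← Finset.sum_add_distrib]
      exact sum_congr rfl fun p _ => by split <;> simp
  map_smul' t z := by
    funext s
    cases s <;>
    · simp only [Sum.elim_inl, Sum.elim_inr, Pi.smul_apply, smul_eq_mul, RingHom.id_apply]
      rw [Finset.mul_sum]
      exact sum_congr rfl fun p _ => by split <;> simp

lemma psi_inl (a : Fin m → Fin n → F) (Q : Finset (Fin m × Fin n)) (G : Finset (Fin m))
    (W : Finset F) (z : {p // p ∈ Q} → F) (i : {i // i ∈ G}) :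
    psi a Q G W z (Sum.inl i) = ∑ p : {p // p ∈ Q}, if p.1.1 = i.1 then z p else 0 := rfl

lemma psi_inr (a : Fin m → Fin n → F) (Q : Finset (Fin m × Fin n)) (G : Finset (Fin m))
    (W : Finset F) (z : {p // p ∈ Q} → F) (x : {x // x ∈ W}) :
    psi a Q G W z (Sum.inr x) = ∑ p : {p // p ∈ Q}, if a p.1.1 p.1.2 = x.1 then z p else 0 := rfl


lemma gsum_total (c : Fin m × Fin n → F) : ∑ i, gsum c i = ∑ p, c p :=
  Finset.sum_fiberwise_of_maps_to (fun p _ => mem_univ p.1) c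

lemma vsum_total (a : Fin m → Fin n → F) (c : Fin m × Fin n → F) :
    ∑ x, vsum a c x = ∑ p, c p :=
  Finset.sum_fiberwise_of_maps_to (fun p _ => mem_univ (a p.1 p.2)) c

lemma vsum_weight (a : Fin m → Fin n → F) (c : Fin m × Fin n → F) (fx : F → F) :
    ∑ x, vsum a c x * fx x = ∑ p, c p * fx (a p.1 p.2) := by
  rw [← Finset.sum_fiberwise_of_maps_to (fun p _ => mem_univ (a p.1 p.2))
    (fun p => c p * fx (a p.1 p.2))]
  refine sum_congr rfl fun x _ => ?_
  rw [vsum, sum_mul]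
  exact sum_congr rfl fun p hp => by rw [(mem_filter.mp hp).2]

def Kmod (a : Fin m → Fin n → F) (Q : Finset (Fin m × Fin n)) :
    Submodule F ((Fin m × Fin n) → F) where
  carrier := {c | (∀ p, c p ≠ 0 → p ∈ Q) ∧ (∀ i, gsum c i = 0) ∧ (∀ x, vsum a c x = 0)}
  add_mem' := by
    rintro c c' ⟨h1, h2, h3⟩ ⟨h1', h2', h3'⟩
    refine ⟨fun p hp => ?_, fun i => ?_, fun x => ?_⟩
    · by_cases h : c p = 0
      · exact h1' p (by simpa [h] using hp)
      · exact h1 p h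
    · simp only [gsum, Pi.add_apply, Finset.sum_add_distrib]
      rw [← gsum, ← gsum, h2 i, h2' i, add_zero]
    · simp only [vsum, Pi.add_apply, Finset.sum_add_distrib]
      rw [← vsum, ← vsum, h3 x, h3' x, add_zero]
  zero_mem' := by
    refine ⟨fun p hp => absurd rfl hp, fun i => ?_, fun x => ?_⟩ <;> simp [gsum, vsum]
  smul_mem' := by
    rintro t c ⟨h1, h2, h3⟩
    refine ⟨fun p hp => ?_, fun i => ?_, fun x => ?_⟩
    · refine h1 p fun h => hp ?_
      simp [h]
    · simp only [gsum, Pi.smul_apply, smul_eq_mul, ← Finset.mul_sum]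
      rw [← gsum, h2 i, mul_zero]
    · simp only [vsum, Pi.smul_apply, smul_eq_mul, ← Finset.mul_sum]
      rw [← vsum, h3 x, mul_zero]

lemma mem_kmod {a : Fin m → Fin n → F} {Q : Finset (Fin m × Fin n)}
    {c : (Fin m × Fin n) → F} :
    c ∈ Kmod a Q ↔
      (∀ p, c p ≠ 0 → p ∈ Q) ∧ (∀ i, gsum c i = 0) ∧ (∀ x, vsum a c x = 0) :=
  Iff.rfl

lemma kmod_mono {a : Fin m → Fin n → F} {Q Q' : Finset (Fin m × Fin n)} (h : Q ⊆ Q') :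
    Kmod a Q ≤ Kmod a Q' := fun c hc => ⟨fun p hp => h (hc.1 p hp), hc.2⟩

lemma extz_mem_kmod (a : Fin m → Fin n → F) (Q : Finset (Fin m × Fin n))
    (G : Finset (Fin m)) (W : Finset F) (i0 : Fin m) (hi0 : i0 ∈ G)
    (hG : ∀ p ∈ Q, p.1 ∈ G) (hW : ∀ p ∈ Q, a p.1 p.2 ∈ W)
    (z : {p // p ∈ Q} → F) (hz : psi a Q (G.erase i0) W z = 0) :
    extz Q z ∈ Kmod a Q := by
  have hsupp : ∀ p, extz Q z p ≠ 0 → p ∈ Q := by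
    intro p hp
    by_contra h
    simp [extz_apply, h] at hp
  have hv : ∀ x, vsum a (extz Q z) x = 0 := by
    intro x
    by_cases hx : x ∈ W
    · have h := congrFun hz (Sum.inr ⟨x, hx⟩)
      rw [psi_inr] at h
      simp only [Pi.zero_apply] at h
      rw [vsum, sum_extz_filter]
      exact h
    · refine Finset.sum_eq_zero fun p hp => ?_
      by_contra hc
      have hpQ := hsupp p hc
      exact hx ((mem_filter.mp hp).2 ▸ hW p hpQ)
  have hg' : ∀ i, i ≠ i0 → gsum (extz Q z) i = 0 := by
    intro i hi
    by_cases hiG : i ∈ G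
    · have h := congrFun hz (Sum.inl ⟨i, mem_erase.mpr ⟨hi, hiG⟩⟩)
      rw [psi_inl] at h
      simp only [Pi.zero_apply] at h
      rw [gsum, sum_extz_filter]
      exact h
    · refine Finset.sum_eq_zero fun p hp => ?_
      by_contra hc
      have hpQ := hsupp p hc
      exact hiG ((mem_filter.mp hp).2 ▸ hG p hpQ)
  have htot : ∑ i, gsum (extz Q z) i = 0 := by
    rw [gsum_total, ← vsum_total a]
    exact Finset.sum_eq_zero fun x _ => hv x
  have hg0 : gsum (extz Q z) i0 = 0 := by
    rw [← htot, Finset.sum_eq_single_of_mem i0 (mem_univ i0)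
      (fun b _ hb => hg' b hb)]
  exact ⟨hsupp, fun i => by rcases eq_or_ne i i0 with rfl | h; exacts [hg0, hg' i h], hv⟩

lemma kmod_card_le (a : Fin m → Fin n → F) (Q : Finset (Fin m × Fin n))
    (G : Finset (Fin m)) (W : Finset F) (i0 : Fin m) (hi0 : i0 ∈ G)
    (hG : ∀ p ∈ Q, p.1 ∈ G) (hW : ∀ p ∈ Q, a p.1 p.2 ∈ W) :
    Q.card ≤ (G.card - 1) + W.card + Module.finrank F (Kmod a Q) := by
  classical
  set Ψ := psi a Q (G.erase i0) W with hΨ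
  have h1 : Module.finrank F ({p // p ∈ Q} → F) = Q.card := by
    rw [Module.finrank_pi, Fintype.card_coe]
  have h2 := LinearMap.finrank_range_add_finrank_ker Ψ
  have h3 : Module.finrank F ↥(LinearMap.range Ψ) ≤ (G.card - 1) + W.card := by
    refine le_trans (Submodule.finrank_le _) ?_
    rw [Module.finrank_pi, Fintype.card_sum, Fintype.card_coe, Fintype.card_coe,
      Finset.card_erase_of_mem hi0]
  have h4 : Module.finrank F ↥(LinearMap.ker Ψ) ≤ Module.finrank F ↥(Kmod a Q) := by
    have hmem : ∀ zz : ↥(LinearMap.ker Ψ),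
        ((extz Q).comp (LinearMap.ker Ψ).subtype) zz ∈ Kmod a Q := by
      intro zz
      exact extz_mem_kmod a Q G W i0 hi0 hG hW zz.1 (LinearMap.mem_ker.mp zz.2)
    have hinj0 : Function.Injective ⇑((extz Q).comp (LinearMap.ker Ψ).subtype) := by
      refine Function.Injective.comp (g := ⇑(extz Q)) ?_ (Submodule.injective_subtype _)
      intro z w h
      funext p
      have := congrFun h p.1
      simpa [extz_apply, p.2] using this
    have hinj : Function.Injective
        ⇑(LinearMap.codRestrict (Kmod a Q) ((extz Q).comp (LinearMap.ker Ψ).subtype) hmem) := by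
      intro z w hzw
      exact hinj0 (by simpa [LinearMap.codRestrict_apply] using congrArg Subtype.val hzw)
    exact LinearMap.finrank_le_finrank_of_injective hinj
  omega


lemma two_le_fiber_of_sum_eq_zero {α : Type*} (s : Finset α) (f : α → F)
    (h0 : ∑ x ∈ s, f x = 0) {b : α} (hb : b ∈ s) (hfb : f b ≠ 0) : 2 ≤ s.card := by
  by_contra h
  push_neg at h
  have h1 : 0 < s.card := card_pos.mpr ⟨b, hb⟩
  have hcard : s.card = 1 := by omega
  obtain ⟨b', hb'⟩ := card_eq_one.mp hcard
  rw [hb'] at h0 hb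
  rw [Finset.sum_singleton] at h0
  rw [Finset.mem_singleton] at hb
  exact hfb (hb ▸ h0)

lemma sum_filter_support (c : Fin m × Fin n → F) (Pr : Fin m × Fin n → Prop)
    [DecidablePred Pr] :
    ∑ p ∈ (univ.filter fun p : Fin m × Fin n => c p ≠ 0).filter Pr, c p
      = ∑ p ∈ univ.filter Pr, c p := by
  refine Finset.sum_subset ?_ ?_
  · intro p hp
    exact mem_filter.mpr ⟨mem_univ _, (mem_filter.mp hp).2⟩
  · intro p hp hnp
    by_contra hc
    exact hnp (mem_filter.mpr ⟨mem_filter.mpr ⟨mem_univ _, hc⟩, (mem_filter.mp hp).2⟩)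

lemma two_le_gfiber (c : Fin m × Fin n → F) {i : Fin m} (hg : gsum c i = 0)
    {p : Fin m × Fin n} (hp : c p ≠ 0) (hpi : p.1 = i) :
    2 ≤ ((univ.filter fun q : Fin m × Fin n => c q ≠ 0).filter fun q => q.1 = i).card := by
  refine two_le_fiber_of_sum_eq_zero _ c ?_
    (mem_filter.mpr ⟨mem_filter.mpr ⟨mem_univ _, hp⟩, hpi⟩) hp
  rw [sum_filter_support]
  exact hg

lemma two_le_vfiber (a : Fin m → Fin n → F) (c : Fin m × Fin n → F) {x : F}
    (hv : vsum a c x = 0) {p : Fin m × Fin n} (hp : c p ≠ 0) (hpx : a p.1 p.2 = x) :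
    2 ≤ ((univ.filter fun q : Fin m × Fin n => c q ≠ 0).filter
      fun q => a q.1 q.2 = x).card := by
  refine two_le_fiber_of_sum_eq_zero _ c ?_
    (mem_filter.mpr ⟨mem_filter.mpr ⟨mem_univ _, hp⟩, hpx⟩) hp
  rw [sum_filter_support]
  exact hv

lemma two_mul_card_image_le {α β : Type*} [DecidableEq β] (P : Finset α) (f : α → β)
    (h2 : ∀ b ∈ P.image f, 2 ≤ (P.filter fun p => f p = b).card) :
    2 * (P.image f).card ≤ P.card := by
  rw [Finset.card_eq_sum_card_fiberwise (f := f) (t := P.image f)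
    (fun x hx => mem_image_of_mem f hx)]
  calc 2 * (P.image f).card = ∑ b ∈ P.image f, 2 := by rw [sum_const, smul_eq_mul, mul_comm]
    _ ≤ _ := sum_le_sum h2

lemma sum_col_inl {d : ℕ} (a : Fin m → Fin n → F)
    (col : Fin m × Fin n → (Fin m ⊕ Fin (d - 2)) → F)
    (hcol : ∀ p, col p = Sum.elim (fun i => if i = p.1 then (1 : F) else 0)
      (fun l : Fin (d - 2) => a p.1 p.2 ^ ((l : ℕ) + 1)))
    (c : Fin m × Fin n → F) (i : Fin m) :
    ∑ p, c p * col p (Sum.inl i) = gsum c i := by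
  rw [gsum, sum_filter]
  refine sum_congr rfl fun p _ => ?_
  rw [hcol]
  simp only [Sum.elim_inl]
  by_cases h : p.1 = i
  · simp [h]
  · have h' : ¬ i = p.1 := fun hh => h hh.symm
    simp [h, h']

lemma sum_col_inr {d : ℕ} (a : Fin m → Fin n → F)
    (col : Fin m × Fin n → (Fin m ⊕ Fin (d - 2)) → F)
    (hcol : ∀ p, col p = Sum.elim (fun i => if i = p.1 then (1 : F) else 0)
      (fun l : Fin (d - 2) => a p.1 p.2 ^ ((l : ℕ) + 1)))
    (c : Fin m × Fin n → F) (l : Fin (d - 2)) :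
    ∑ p, c p * col p (Sum.inr l) = ∑ x, vsum a c x * x ^ ((l : ℕ) + 1) := by
  rw [vsum_weight]
  refine sum_congr rfl fun p _ => ?_
  rw [hcol]
  rfl


lemma dirB {d r mm : ℕ} (hd : 5 ≤ d) (hr : d - 2 ≤ r)
    (a : Fin mm → Fin (r + 1) → F) (hinj : ∀ i, Function.Injective (a i))
    (col : Fin mm × Fin (r + 1) → (Fin mm ⊕ Fin (d - 2)) → F)
    (hcol : ∀ p, col p = Sum.elim (fun i => if i = p.1 then (1 : F) else 0)
      (fun l : Fin (d - 2) => a p.1 p.2 ^ ((l : ℕ) + 1)))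
    (hA : ∀ S : Finset (Fin mm), S.Nonempty → S.card ≤ (d - 1) / 2 →
        r * S.card + 1 ≤ (S.biUnion fun i => Finset.univ.image (a i)).card)
    (T : Finset (Fin mm × Fin (r + 1))) (hT : T.card = d - 1) :
    LinearIndependent F (fun p : {x // x ∈ T} => col p.1) := by
  classical
  rw [Fintype.linearIndependent_iff]
  intro g hg
  by_contra hng
  push_neg at hng
  obtain ⟨p1, hp1⟩ := hng
  set c : Fin mm × Fin (r + 1) → F := extz T g with hcdef
  have hY : ∀ s, ∑ p, c p * col p s = 0 := by
    intro s
    have h := congrFun hg s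
    rw [Finset.sum_apply] at h
    simp only [Pi.smul_apply, smul_eq_mul] at h
    rw [hcdef, sum_extz_mul]
    exact h
  have hgsum : ∀ i, gsum c i = 0 := fun i => by
    rw [← sum_col_inl a col hcol c i]; exact hY _
  have hmom : ∀ l : Fin (d - 2), ∑ x, vsum a c x * x ^ ((l : ℕ) + 1) = 0 := fun l => by
    rw [← sum_col_inr a col hcol c l]; exact hY _
  set P := univ.filter (fun p : Fin mm × Fin (r + 1) => c p ≠ 0) with hPdef
  set V := P.image (fun p => a p.1 p.2) with hVdef
  set S := P.image Prod.fst with hSdef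
  have hp1P : p1.1 ∈ P := by
    refine mem_filter.mpr ⟨mem_univ _, ?_⟩
    rw [hcdef]
    simpa [extz_apply, p1.2] using hp1
  have hPT : P ⊆ T := by
    intro p hp
    have hne := (mem_filter.mp hp).2
    by_contra h
    rw [hcdef] at hne
    simp [extz_apply, h] at hne
  have hPcard : P.card ≤ d - 1 := hT ▸ card_le_card hPT
  have hmom' : ∀ nn, nn < d - 1 → ∑ x, vsum a c x * x ^ nn = 0 := by
    intro nn hnn
    rcases Nat.eq_zero_or_pos nn with rfl | hpos
    · simp only [pow_zero, mul_one]
      rw [vsum_total, ← gsum_total]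
      exact Finset.sum_eq_zero fun i _ => hgsum i
    · have hl : nn - 1 < d - 2 := by omega
      have h := hmom ⟨nn - 1, hl⟩
      simpa [Nat.sub_add_cancel hpos] using h
  have hvz : ∀ x, x ∉ V → vsum a c x = 0 := by
    intro x hx
    refine Finset.sum_eq_zero fun p hp => ?_
    by_contra hcp
    exact hx (mem_image.mpr ⟨p, mem_filter.mpr ⟨mem_univ _, hcp⟩, (mem_filter.mp hp).2⟩)
  have hvall : ∀ x, vsum a c x = 0 := by
    intro x0
    by_cases hx0 : x0 ∈ V
    swap
    · exact hvz x0 hx0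
    have hVle : V.card ≤ d - 1 := le_trans card_image_le hPcard
    set L := Lagrange.basis V id x0 with hL
    have hdeg : L.natDegree < d - 1 := by
      rw [hL, Lagrange.natDegree_basis (Set.injOn_id _) hx0]
      omega
    have h1 : ∑ x, vsum a c x * Polynomial.eval x L = vsum a c x0 := by
      rw [← Finset.sum_subset (subset_univ V) (fun x _ hx => by rw [hvz x hx, zero_mul])]
      rw [Finset.sum_eq_single_of_mem x0 hx0 (fun b hb hne => by
        rw [show Polynomial.eval b L = 0 from Lagrange.eval_basis_of_ne (v := id) (Ne.symm hne) hb,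
          mul_zero])]
      rw [show Polynomial.eval x0 L = 1 from Lagrange.eval_basis_self (Set.injOn_id _) hx0,
        mul_one]
    have h2 : ∑ x, vsum a c x * Polynomial.eval x L = 0 := by
      calc ∑ x, vsum a c x * Polynomial.eval x L
          = ∑ x, ∑ nn ∈ range (d - 1), vsum a c x * (L.coeff nn * x ^ nn) := by
            refine sum_congr rfl fun x _ => ?_
            rw [Polynomial.eval_eq_sum_range' hdeg, Finset.mul_sum]
        _ = ∑ nn ∈ range (d - 1), ∑ x, vsum a c x * (L.coeff nn * x ^ nn) := Finset.sum_comm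
        _ = 0 := by
            refine Finset.sum_eq_zero fun nn hnn => ?_
            have h := hmom' nn (mem_range.mp hnn)
            calc ∑ x, vsum a c x * (L.coeff nn * x ^ nn)
                = L.coeff nn * ∑ x, vsum a c x * x ^ nn := by
                  rw [Finset.mul_sum]
                  exact sum_congr rfl fun x _ => by ring
              _ = 0 := by rw [h, mul_zero]
    rw [← h1, h2]
  -- counting
  have hSne : S.Nonempty := ⟨p1.1.1, mem_image_of_mem _ hp1P⟩
  have h2S : 2 * S.card ≤ P.card := by
    refine two_mul_card_image_le P Prod.fst fun i hi => ?_
    obtain ⟨p, hpP, rfl⟩ := mem_image.mp hi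
    exact two_le_gfiber c (hgsum p.1) ((mem_filter.mp hpP).2) rfl
  have h2V : 2 * V.card ≤ P.card := by
    refine two_mul_card_image_le P (fun p => a p.1 p.2) fun x hx => ?_
    obtain ⟨p, hpP, rfl⟩ := mem_image.mp hx
    exact two_le_vfiber a c (hvall _) ((mem_filter.mp hpP).2) rfl
  have hS2 : S.card ≤ (d - 1) / 2 := by
    rw [Nat.le_div_iff_mul_le (by norm_num)]
    omega
  set U := S.biUnion (fun i => univ.image (a i)) with hUdef
  have hU := hA S hSne hS2
  set mult : F → ℕ := fun x => (S.filter (fun i => x ∈ univ.image (a i))).card with hmultdef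
  have hmult_sum : ∑ x ∈ U, mult x = S.card * (r + 1) := by
    calc ∑ x ∈ U, mult x
        = ∑ x ∈ U, ∑ i ∈ S, if x ∈ univ.image (a i) then 1 else 0 :=
          sum_congr rfl fun x _ => Finset.card_filter _ _
      _ = ∑ i ∈ S, ∑ x ∈ U, if x ∈ univ.image (a i) then 1 else 0 := Finset.sum_comm
      _ = ∑ i ∈ S, (U.filter (fun x => x ∈ univ.image (a i))).card :=
          sum_congr rfl fun i _ => (Finset.card_filter _ _).symm
      _ = ∑ i ∈ S, (r + 1) := by
          refine sum_congr rfl fun i hi => ?_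
          rw [Finset.filter_mem_eq_inter, Finset.inter_eq_right.mpr (subset_biUnion_of_mem _ hi)]
          rw [Finset.card_image_of_injective _ (hinj i), Finset.card_univ, Fintype.card_fin]
      _ = S.card * (r + 1) := by rw [sum_const, smul_eq_mul]
  have hVU : V ⊆ U := by
    intro x hx
    obtain ⟨p, hpP, rfl⟩ := mem_image.mp hx
    exact mem_biUnion.mpr ⟨p.1, mem_image_of_mem _ hpP, mem_image_of_mem _ (mem_univ _)⟩
  have hmultV : ∀ x ∈ V, (P.filter fun p => a p.1 p.2 = x).card ≤ mult x := by
    intro x hx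
    refine Finset.card_le_card_of_injOn Prod.fst ?_ ?_
    · intro p hp
      rcases mem_filter.mp hp with ⟨hpP, hpx⟩
      refine mem_filter.mpr ⟨mem_image_of_mem _ hpP, ?_⟩
      exact hpx ▸ mem_image_of_mem _ (mem_univ _)
    · intro p hp q hq hpq
      obtain ⟨hpP, hpx⟩ := mem_filter.mp (Finset.mem_coe.mp hp)
      obtain ⟨hqP, hqx⟩ := mem_filter.mp (Finset.mem_coe.mp hq)
      have h2 : a p.1 p.2 = a p.1 q.2 := by rw [hpx, ← hqx, hpq]
      exact Prod.ext hpq (hinj p.1 h2)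
  have hPsum : P.card ≤ ∑ x ∈ V, mult x := by
    rw [Finset.card_eq_sum_card_fiberwise (f := fun p => a p.1 p.2) (t := V)
      (fun p hp => mem_image_of_mem _ hp)]
    exact sum_le_sum hmultV
  have hmult1 : ∀ x ∈ U, 1 ≤ mult x := by
    intro x hx
    obtain ⟨i, hiS, hxA⟩ := mem_biUnion.mp hx
    exact card_pos.mpr ⟨i, mem_filter.mpr ⟨hiS, hxA⟩⟩
  have hsdiff : ∑ x ∈ U \ V, mult x + ∑ x ∈ V, mult x = ∑ x ∈ U, mult x :=
    Finset.sum_sdiff hVU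
  have hsd2 : (U \ V).card ≤ ∑ x ∈ U \ V, mult x := by
    rw [Finset.card_eq_sum_ones]
    exact sum_le_sum fun x hx => hmult1 x (sdiff_subset hx)
  have hcsd : (U \ V).card = U.card - V.card := card_sdiff_of_subset hVU
  have hVUc : V.card ≤ U.card := card_le_card hVU
  have hfinal : S.card * (r + 1) + 1 ≤ S.card * (r + 1) := by
    calc S.card * (r + 1) + 1 = S.card + (r * S.card + 1) := by ring
      _ ≤ S.card + U.card := Nat.add_le_add_left hU _
      _ ≤ P.card + (U.card - V.card) := by omega
      _ ≤ (∑ x ∈ V, mult x) + ∑ x ∈ U \ V, mult x := by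
          refine Nat.add_le_add hPsum ?_
          omega
      _ = S.card * (r + 1) := by rw [add_comm, hsdiff, hmult_sum]
  exact Nat.not_succ_le_self _ hfinal


lemma dirA {d r mm : ℕ} (hd : 5 ≤ d) (hr : d - 2 ≤ r) (hm : 0 < mm)
    (a : Fin mm → Fin (r + 1) → F) (hinj : ∀ i, Function.Injective (a i))
    (col : Fin mm × Fin (r + 1) → (Fin mm ⊕ Fin (d - 2)) → F)
    (hcol : ∀ p, col p = Sum.elim (fun i => if i = p.1 then (1 : F) else 0)
      (fun l : Fin (d - 2) => a p.1 p.2 ^ ((l : ℕ) + 1)))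
    (hLI : ∀ T : Finset (Fin mm × Fin (r + 1)), T.card = d - 1 →
        LinearIndependent F (fun p : {x // x ∈ T} => col p.1)) :
    ∀ S : Finset (Fin mm), S.Nonempty → S.card ≤ (d - 1) / 2 →
      r * S.card + 1 ≤ (S.biUnion fun i => Finset.univ.image (a i)).card := by
  classical
  intro S hSne hS2
  by_contra hUlt
  push_neg at hUlt
  set U := S.biUnion (fun i => univ.image (a i)) with hUdef
  have hUle : U.card ≤ r * S.card := Nat.lt_succ_iff.mp hUlt
  obtain ⟨i0, hi0⟩ := hSne
  set Q1 := S ×ˢ (univ : Finset (Fin (r + 1))) with hQ1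
  have hQ1G : ∀ p ∈ Q1, p.1 ∈ S := fun p hp => (mem_product.mp hp).1
  have hQ1W : ∀ p ∈ Q1, a p.1 p.2 ∈ U := fun p hp =>
    mem_biUnion.mpr ⟨p.1, (mem_product.mp hp).1, mem_image_of_mem _ (mem_univ _)⟩
  have hfr1 := kmod_card_le a Q1 S U i0 hi0 hQ1G hQ1W
  have hQ1card : Q1.card = S.card * (r + 1) := by
    rw [hQ1, Finset.card_product, Finset.card_univ, Fintype.card_fin]
  have hSpos : 0 < S.card := card_pos.mpr ⟨i0, hi0⟩
  have hfrpos : 0 < Module.finrank F ↥(Kmod a Q1) := by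
    rw [hQ1card] at hfr1
    have hexp : S.card * (r + 1) = r * S.card + S.card := by ring
    rw [hexp] at hfr1
    obtain ⟨t, ht⟩ : ∃ t, r * S.card = t := ⟨_, rfl⟩
    rw [ht] at hfr1 hUle
    omega
  have hKne : Kmod a Q1 ≠ ⊥ := by
    intro hbot
    rw [hbot, finrank_bot] at hfrpos
    exact lt_irrefl 0 hfrpos
  obtain ⟨c0, hc0K, hc0ne⟩ := (Submodule.ne_bot_iff _).mp hKne
  set K : Finset ((Fin mm × Fin (r + 1)) → F) :=
    univ.filter (fun c => c ∈ Kmod a Q1 ∧ c ≠ 0) with hKdef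
  obtain ⟨c, hcmem, hcmin⟩ := Finset.exists_min_image K
    (fun c => (univ.filter (fun p => c p ≠ 0)).card)
    ⟨c0, mem_filter.mpr ⟨mem_univ _, hc0K, hc0ne⟩⟩
  obtain ⟨-, hcK, hcne⟩ := mem_filter.mp hcmem
  set P := univ.filter (fun p : Fin mm × Fin (r + 1) => c p ≠ 0) with hPdef
  have hPne : P.Nonempty := by
    rcases Function.ne_iff.mp hcne with ⟨p, hp⟩
    exact ⟨p, mem_filter.mpr ⟨mem_univ _, hp⟩⟩
  obtain ⟨p0, hp0⟩ := hPne
  have hcp0 : c p0 ≠ 0 := (mem_filter.mp hp0).2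
  set S' := P.image Prod.fst with hS'def
  set V' := P.image (fun p => a p.1 p.2) with hV'def
  have hS'S : S' ⊆ S := by
    intro i hi
    obtain ⟨p, hpP, rfl⟩ := mem_image.mp hi
    exact hQ1G p (hcK.1 p (mem_filter.mp hpP).2)
  have hi1 : p0.1 ∈ S' := mem_image_of_mem _ hp0
  have h2V' : 2 * V'.card ≤ P.card := by
    refine two_mul_card_image_le P (fun p => a p.1 p.2) fun x hx => ?_
    obtain ⟨p, hpP, rfl⟩ := mem_image.mp hx
    exact two_le_vfiber a c (hcK.2.2 _) ((mem_filter.mp hpP).2) rfl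
  have hPle : P.card ≤ S'.card + V'.card := by
    by_contra hgt
    push_neg at hgt
    have hfr2 := kmod_card_le a P S' V' p0.1 hi1
      (fun p hp => mem_image_of_mem _ hp) (fun p hp => mem_image_of_mem _ hp)
    have hS'pos : 0 < S'.card := card_pos.mpr ⟨p0.1, hi1⟩
    have hfr2' : 2 ≤ Module.finrank F ↥(Kmod a P) := by omega
    have hspan : Module.finrank F ↥(Submodule.span F {c}) = 1 := finrank_span_singleton hcne
    have hnle : ¬ (Kmod a P ≤ Submodule.span F {c}) := by
      intro hle
      have hmono := Submodule.finrank_mono hle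
      rw [hspan] at hmono
      omega
    obtain ⟨zz, hzzK, hzznsp⟩ := SetLike.not_le_iff_exists.mp hnle
    have hzzQ1 : zz ∈ Kmod a Q1 :=
      kmod_mono (fun p hp => hcK.1 p (mem_filter.mp hp).2) hzzK
    set w := c p0 • zz - zz p0 • c with hw
    have hwK : w ∈ Kmod a Q1 :=
      Submodule.sub_mem _ (Submodule.smul_mem _ _ hzzQ1) (Submodule.smul_mem _ _ hcK)
    have hwp0 : w p0 = 0 := by
      simp [hw, mul_comm]
    have hw0 : w = 0 := by
      by_contra hwne
      have hwmem : w ∈ K := mem_filter.mpr ⟨mem_univ _, hwK, hwne⟩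
      have hle := hcmin w hwmem
      have hsub : univ.filter (fun p => w p ≠ 0) ⊆ P.erase p0 := by
        intro p hp
        have hwp := (mem_filter.mp hp).2
        refine mem_erase.mpr ⟨fun h => by rw [h] at hwp; exact hwp hwp0, ?_⟩
        by_contra hpP
        have hcp : c p = 0 := by
          by_contra h; exact hpP (mem_filter.mpr ⟨mem_univ _, h⟩)
        have hzp : zz p = 0 := by
          by_contra h; exact hpP (hzzK.1 p h)
        apply hwp
        simp [hw, hcp, hzp]
      have hc2 := card_le_card hsub
      rw [card_erase_of_mem hp0] at hc2
      have hPpos : 0 < P.card := card_pos.mpr ⟨p0, hp0⟩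
      omega
    have hzsp : zz ∈ Submodule.span F {c} := by
      rw [hw] at hw0
      have heq : c p0 • zz = zz p0 • c := sub_eq_zero.mp hw0
      have hzz : zz = (c p0)⁻¹ • (zz p0 • c) := by
        rw [← heq, smul_smul, inv_mul_cancel₀ hcp0, one_smul]
      rw [hzz]
      exact Submodule.smul_mem _ _ (Submodule.smul_mem _ _
        (Submodule.mem_span_singleton_self c))
    exact hzznsp hzsp
  have hS'card : S'.card ≤ (d - 1) / 2 := le_trans (card_le_card hS'S) hS2
  have hPd : P.card ≤ d - 1 := by omega
  obtain ⟨T, hPT, hTcard⟩ := Finset.exists_superset_card_eq hPd (by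
    rw [Fintype.card_prod, Fintype.card_fin, Fintype.card_fin]
    have h1 : d - 1 ≤ r + 1 := by omega
    calc d - 1 ≤ r + 1 := h1
      _ = 1 * (r + 1) := (one_mul _).symm
      _ ≤ mm * (r + 1) := Nat.mul_le_mul_right _ hm)
  have hzero : ∑ p : {x // x ∈ T}, (fun p : {x // x ∈ T} => c p.1) p • col p.1 = 0 := by
    funext s
    rw [Finset.sum_apply]
    simp only [Pi.smul_apply, smul_eq_mul, Pi.zero_apply]
    rw [Finset.sum_coe_sort T (fun p => c p * col p s)]
    rw [Finset.sum_subset (subset_univ T) (fun p _ hpT => by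
      have hcp : c p = 0 := by
        by_contra h
        exact hpT (hPT (mem_filter.mpr ⟨mem_univ _, h⟩))
      rw [hcp, zero_mul])]
    rcases s with i | l
    · rw [sum_col_inl a col hcol c i]
      exact hcK.2.1 i
    · rw [sum_col_inr a col hcol c l]
      exact Finset.sum_eq_zero fun x _ => by rw [hcK.2.2 x, zero_mul]
  have hall := Fintype.linearIndependent_iff.mp (hLI T hTcard) (fun p => c p.1) hzero
  exact hcp0 (hall ⟨p0, hPT hp0⟩)


end Stmt6Aux

/-- Criterion: any `d-1` columns of the Vandermonde-structured parity-check
matrix `H` are linearly independent iff every nonempty collection of at most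
`⌊(d-1)/2⌋` of the sets `A_i` covers at least `r|S| + 1` elements. -/
theorem stmt_6 {F : Type*} [Field F] [Fintype F] [DecidableEq F]
    (d r m : ℕ) (hd : 5 ≤ d) (hr : d - 2 ≤ r) (hm : 0 < m)
    (a : Fin m → Fin (r + 1) → F)
    (hinj : ∀ i, Function.Injective (a i))
    (col : Fin m × Fin (r + 1) → (Fin m ⊕ Fin (d - 2)) → F)
    (hcol : ∀ p, col p = Sum.elim
      (fun i => if i = p.1 then (1 : F) else 0)
      (fun (l : Fin (d - 2)) => a p.1 p.2 ^ ((l : ℕ) + 1))) :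
    (∀ T : Finset (Fin m × Fin (r + 1)), T.card = d - 1 →
        LinearIndependent F (fun p : {x // x ∈ T} => col p.1)) ↔
      (∀ S : Finset (Fin m), S.Nonempty → S.card ≤ (d - 1) / 2 →
        r * S.card + 1 ≤ (S.biUnion (fun i => Finset.univ.image (a i))).card) := by
  constructor
  · intro hLI
    exact Stmt6Aux.dirA hd hr hm a hinj col hcol hLI
  · intro hA T hT
    exact Stmt6Aux.dirB hd hr a hinj col hcol hA T hT
end

section
/- Let H = (X, E) be an (r+1)-uniform hypergraph. Then the following are equivalent: (1) for every collection of k ≤ t distinct hyperedges A_{i_1}, ..., A_{i_k} ∈ E, one has |A_{i_1} ∪ ... ∪ A_{i_k}| ≥ rk + 1; (2) H contains no Berge ℓ-cycle for any 2 ≤ ℓ ≤ t. -/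
/-- A Berge `ℓ`-cycle in a hypergraph with edge set `E`: `ℓ` distinct vertices
and `ℓ` distinct hyperedges with `{v_{i-1}, v_i} ⊆ e_i` cyclically. -/
def HasBergeCycle {X : Type*} (E : Finset (Finset X)) (ℓ : ℕ) : Prop :=
  ∃ (v : ZMod ℓ → X) (e : ZMod ℓ → Finset X),
    Function.Injective v ∧ Function.Injective e ∧ (∀ i, e i ∈ E) ∧
    ∀ i : ZMod ℓ, v (i - 1) ∈ e i ∧ v i ∈ e i

section Aux
variable {X : Type*} [DecidableEq X] {E : Finset (Finset X)}

lemma hasBergeCycle_of (ℓ : ℕ) (hℓ : 2 ≤ ℓ) (u : ℕ → X) (g : ℕ → Finset X)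
    (hu : ∀ a b, a < ℓ → b < ℓ → u a = u b → a = b)
    (hg : ∀ a b, a < ℓ → b < ℓ → g a = g b → a = b)
    (hgE : ∀ m, m < ℓ → g m ∈ E)
    (h0 : ∀ m, m < ℓ → u m ∈ g m)
    (h1 : ∀ m, m + 1 < ℓ → u m ∈ g (m + 1))
    (hw : u (ℓ - 1) ∈ g 0) : HasBergeCycle E ℓ := by
  haveI : NeZero ℓ := ⟨by omega⟩
  have key : ∀ i : ZMod ℓ, (i - 1).val = if i.val = 0 then ℓ - 1 else i.val - 1 := by
    intro i
    by_cases h : i.val = 0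
    · have hi : i = 0 := by
        have := ZMod.natCast_rightInverse (n := ℓ) i
        rw [h] at this; simpa using this.symm
      subst hi
      simp only [if_pos h]
      have : ((0 : ZMod ℓ) - 1) = ((ℓ - 1 : ℕ) : ZMod ℓ) := by
        have : ((ℓ - 1 : ℕ) : ZMod ℓ) = (ℓ : ZMod ℓ) - 1 := by
          push_cast [Nat.cast_sub (by omega : 1 ≤ ℓ)]; ring
        rw [this, ZMod.natCast_self]
      rw [this, ZMod.val_cast_of_lt (by omega)]
    · have hi : i = ((i.val : ℕ) : ZMod ℓ) := (ZMod.natCast_rightInverse i).symm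
      rw [if_neg h]
      have : i - 1 = ((i.val - 1 : ℕ) : ZMod ℓ) := by
        rw [Nat.cast_sub (by omega : 1 ≤ i.val)]
        rw [← hi]; push_cast; ring
      rw [this, ZMod.val_cast_of_lt (by have := ZMod.val_lt i; omega)]
  refine ⟨fun z => u z.val, fun z => g z.val, ?_, ?_, ?_, ?_⟩
  · intro a b hab
    exact ZMod.val_injective ℓ (hu _ _ (ZMod.val_lt a) (ZMod.val_lt b) hab)
  · intro a b hab
    exact ZMod.val_injective ℓ (hg _ _ (ZMod.val_lt a) (ZMod.val_lt b) hab)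
  · intro i; exact hgE _ (ZMod.val_lt i)
  · intro i
    refine ⟨?_, h0 _ (ZMod.val_lt i)⟩
    show u (i-1).val ∈ g i.val
    rw [key i]
    by_cases h : i.val = 0
    · rw [if_pos h]
      have : g i.val = g 0 := by rw [h]
      rw [this]; exact hw
    · rw [if_neg h]
      have hlt : i.val - 1 + 1 < ℓ := by have := ZMod.val_lt i; omega
      have := h1 (i.val - 1) hlt
      have he : i.val - 1 + 1 = i.val := by omega
      rwa [he] at this

end Aux

section Path
variable {X : Type*} [DecidableEq X] {E : Finset (Finset X)}
variable (i : ℕ) (A : ℕ → Finset X) (v : ℕ → X)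

lemma chord1
    (hAE : ∀ p, p < i → A p ∈ E)
    (hAinj : ∀ p q, p < i → q < i → A p = A q → p = q)
    (hv : ∀ p, p + 1 < i → v p ∈ A p ∧ v p ∈ A (p + 1))
    (hvinj : ∀ p q, p + 1 < i → q + 1 < i → v p = v q → p = q)
    (p : ℕ) (hp : p + 2 < i) (hx : v p ∈ A (i - 1)) :
    ∃ ℓ, 2 ≤ ℓ ∧ ℓ ≤ i ∧ HasBergeCycle E ℓ := by
  set ℓ := i - 1 - p with hℓdef
  refine ⟨ℓ, by omega, by omega, ?_⟩
  refine hasBergeCycle_of ℓ (by omega) (fun m => v (p + m))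
    (fun m => if m = 0 then A (i - 1) else A (p + m)) ?_ ?_ ?_ ?_ ?_ ?_ <;> beta_reduce
  · intro a b ha hb hab
    beta_reduce at hab
    have := hvinj (p + a) (p + b) (by omega) (by omega) hab
    omega
  · intro a b ha hb hab
    rcases eq_or_ne a 0 with rfl | ha0 <;> rcases eq_or_ne b 0 with rfl | hb0
    · rfl
    · rw [if_pos rfl, if_neg hb0] at hab
      have := hAinj _ _ (by omega) (by omega) hab; omega
    · rw [if_neg ha0, if_pos rfl] at hab
      have := hAinj _ _ (by omega) (by omega) hab; omega
    · rw [if_neg ha0, if_neg hb0] at hab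
      have := hAinj _ _ (by omega) (by omega) hab; omega
  · intro m hm
    by_cases h : m = 0
    · rw [if_pos h]; exact hAE _ (by omega)
    · rw [if_neg h]; exact hAE _ (by omega)
  · intro m hm
    by_cases h : m = 0
    · subst h; rw [if_pos rfl]; simpa using hx
    · rw [if_neg h]; exact (hv (p + m) (by omega)).1
  · intro m hm
    rw [if_neg (by omega)]
    have := (hv (p + m) (by omega)).2
    have he : p + m + 1 = p + (m + 1) := by omega
    rwa [he] at this
  · rw [if_pos rfl]
    have h1 : p + (ℓ - 1) = i - 2 := by omega
    rw [h1]
    have := (hv (i - 2) (by omega)).2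
    have h2 : i - 2 + 1 = i - 1 := by omega
    rwa [h2] at this

lemma chord2
    (hAE : ∀ p, p < i → A p ∈ E)
    (hAinj : ∀ p q, p < i → q < i → A p = A q → p = q)
    (hv : ∀ p, p + 1 < i → v p ∈ A p ∧ v p ∈ A (p + 1))
    (hvinj : ∀ p q, p + 1 < i → q + 1 < i → v p = v q → p = q)
    (p : ℕ) (x : X) (hp : p + 1 < i) (hx1 : x ∈ A (i - 1)) (hx2 : x ∈ A p)
    (hfresh : ∀ q, q + 1 < i → x ≠ v q) :
    ∃ ℓ, 2 ≤ ℓ ∧ ℓ ≤ i ∧ HasBergeCycle E ℓ := by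
  set ℓ := i - p with hℓdef
  refine ⟨ℓ, by omega, by omega, ?_⟩
  refine hasBergeCycle_of ℓ (by omega) (fun m => if m = ℓ - 1 then x else v (p + m))
    (fun m => A (p + m)) ?_ ?_ ?_ ?_ ?_ ?_ <;> beta_reduce
  · intro a b ha hb hab
    rcases eq_or_ne a (ℓ - 1) with rfl | ha0 <;> rcases eq_or_ne b (ℓ - 1) with rfl | hb0
    · rfl
    · rw [if_pos rfl, if_neg hb0] at hab
      exact absurd hab (hfresh (p + b) (by omega))
    · rw [if_neg ha0, if_pos rfl] at hab
      exact absurd hab.symm (hfresh (p + a) (by omega))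
    · rw [if_neg ha0, if_neg hb0] at hab
      have := hvinj _ _ (by omega) (by omega) hab; omega
  · intro a b ha hb hab
    have := hAinj _ _ (by omega) (by omega) hab; omega
  · intro m hm; exact hAE _ (by omega)
  · intro m hm
    by_cases h : m = ℓ - 1
    · subst h; rw [if_pos rfl]
      have h1 : p + (ℓ - 1) = i - 1 := by omega
      rwa [h1]
    · rw [if_neg h]; exact (hv (p + m) (by omega)).1
  · intro m hm
    rw [if_neg (by omega)]
    have := (hv (p + m) (by omega)).2
    have he : p + m + 1 = p + (m + 1) := by omega
    rwa [he] at this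
  · rw [if_pos rfl]; simpa using hx2

end Path

section Grow
variable {X : Type*} [DecidableEq X] {E : Finset (Finset X)}

lemma grow (S : Finset (Finset X)) (hSE : S ⊆ E)
    (hS2 : ∀ A ∈ S, 2 ≤ (A ∩ ((S.erase A).biUnion id)).card) :
    ∀ (m i : ℕ) (A : ℕ → Finset X) (v : ℕ → X), 1 ≤ i → S.card ≤ i + m →
    (∀ p, p < i → A p ∈ S) →
    (∀ p q, p < i → q < i → A p = A q → p = q) →
    (∀ p, p + 1 < i → v p ∈ A p ∧ v p ∈ A (p + 1)) →
    (∀ p q, p + 1 < i → q + 1 < i → v p = v q → p = q) →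
    ∃ ℓ, 2 ≤ ℓ ∧ ℓ ≤ S.card ∧ HasBergeCycle E ℓ := by
  intro m
  induction m using Nat.strong_induction_on with
  | _ m ih =>
  intro i A v hi hcard hAS hAinj hv hvinj
  have hAE : ∀ p, p < i → A p ∈ E := fun p hp => hSE (hAS p hp)
  have hiS : i ≤ S.card := by
    have hsub : (Finset.range i).image A ⊆ S := by
      intro B hB
      obtain ⟨p, hp, rfl⟩ := Finset.mem_image.1 hB
      exact hAS p (Finset.mem_range.1 hp)
    calc i = ((Finset.range i).image A).card := by
            rw [Finset.card_image_of_injOn, Finset.card_range]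
            intro a ha b hb hab
            exact hAinj a b (Finset.mem_range.1 ha) (Finset.mem_range.1 hb) hab
      _ ≤ S.card := Finset.card_le_card hsub
  set L := A (i - 1) with hLdef
  have hLS : L ∈ S := hAS _ (by omega)
  have h2 := hS2 L hLS
  obtain ⟨a, ha, b, hb, hab⟩ := Finset.one_lt_card.1 h2
  -- choose x ∈ L ∩ U with x ≠ v (i - 2)
  obtain ⟨x, hxmem, hxne⟩ : ∃ x ∈ L ∩ ((S.erase L).biUnion id), x ≠ v (i - 2) := by
    by_cases h : a = v (i - 2)
    · exact ⟨b, hb, by rw [← h]; exact hab.symm⟩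
    · exact ⟨a, ha, h⟩
  have hxL : x ∈ L := (Finset.mem_inter.1 hxmem).1
  obtain ⟨B, hBmem, hxB⟩ := Finset.mem_biUnion.1 (Finset.mem_inter.1 hxmem).2
  have hBS : B ∈ S := Finset.mem_of_mem_erase hBmem
  have hBL : B ≠ L := Finset.ne_of_mem_erase hBmem
  have hxB : x ∈ B := hxB
  by_cases hcase : ∃ q, q + 1 < i ∧ x = v q
  · -- chord to an old vertex
    obtain ⟨q, hq, hxq⟩ := hcase
    have hq2 : q + 2 < i := by
      rcases Nat.lt_or_ge (q + 2) i with h | h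
      · exact h
      · exfalso; have : q = i - 2 := by omega
        exact hxne (by rw [hxq, this])
    obtain ⟨ℓ, h1, h2, h3⟩ := chord1 i A v hAE hAinj hv hvinj q hq2 (by rw [← hxq]; exact hxL)
    exact ⟨ℓ, h1, le_trans h2 hiS, h3⟩
  · push_neg at hcase
    by_cases hB : ∃ p, p < i ∧ A p = B
    · -- chord to an old edge
      obtain ⟨p, hp, hpB⟩ := hB
      have hpi : p + 1 < i := by
        rcases Nat.lt_or_ge (p + 1) i with h | h
        · exact h
        · exfalso; have : p = i - 1 := by omega
          exact hBL (by rw [← hpB, this])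
      obtain ⟨ℓ, h1, h2, h3⟩ := chord2 i A v hAE hAinj hv hvinj p x hpi hxL
        (by rw [hpB]; exact hxB) hcase
      exact ⟨ℓ, h1, le_trans h2 hiS, h3⟩
    · -- extend the path
      push_neg at hB
      set A' : ℕ → Finset X := fun q => if q = i then B else A q with hA'def
      set v' : ℕ → X := fun q => if q = i - 1 then x else v q with hv'def
      have hA'S : ∀ p, p < i + 1 → A' p ∈ S := by
        intro p hp
        by_cases h : p = i
        · simp only [hA'def, if_pos h]; exact hBS
        · simp only [hA'def, if_neg h]; exact hAS p (by omega)
      have hA'inj : ∀ p q, p < i + 1 → q < i + 1 → A' p = A' q → p = q := by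
        intro p q hp hq hpq
        by_cases h1 : p = i <;> by_cases h2 : q = i
        · omega
        · exfalso; simp only [hA'def, if_pos h1, if_neg h2] at hpq
          exact hB q (by omega) hpq.symm
        · exfalso; simp only [hA'def, if_neg h1, if_pos h2] at hpq
          exact hB p (by omega) hpq
        · simp only [hA'def, if_neg h1, if_neg h2] at hpq
          exact hAinj p q (by omega) (by omega) hpq
      have hm1 : 1 ≤ m := by
        by_contra h
        have hm0 : m = 0 := by omega
        have : i + 1 ≤ S.card := by
          have hsub : (Finset.range (i + 1)).image A' ⊆ S := by
            intro C hC
            obtain ⟨p, hp, rfl⟩ := Finset.mem_image.1 hC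
            exact hA'S p (Finset.mem_range.1 hp)
          calc i + 1 = ((Finset.range (i + 1)).image A').card := by
                rw [Finset.card_image_of_injOn, Finset.card_range]
                intro c hc d hd hcd
                exact hA'inj c d (Finset.mem_range.1 hc) (Finset.mem_range.1 hd) hcd
            _ ≤ S.card := Finset.card_le_card hsub
        omega
      refine ih (m - 1) (by omega) (i + 1) A' v' (by omega) (by omega) hA'S hA'inj ?_ ?_
      · intro p hp
        by_cases h : p = i - 1
        · subst h
          have e1 : A' (i - 1) = A (i - 1) := by
            simp only [hA'def]; rw [if_neg (by omega)]
          have e2 : A' (i - 1 + 1) = B := by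
            simp only [hA'def]; rw [if_pos (by omega)]
          have e3 : v' (i - 1) = x := by simp [hv'def]
          rw [e1, e2, e3]
          exact ⟨hxL, hxB⟩
        · have hp2 : p + 1 < i := by omega
          have e1 : A' p = A p := by simp only [hA'def]; rw [if_neg (by omega)]
          have e2 : A' (p + 1) = A (p + 1) := by
            simp only [hA'def]; rw [if_neg (by omega)]
          have e3 : v' p = v p := by simp only [hv'def]; rw [if_neg h]
          rw [e1, e2, e3]
          exact hv p hp2
      · intro p q hp hq hpq
        by_cases h1 : p = i - 1 <;> by_cases h2 : q = i - 1
        · omega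
        · exfalso
          simp only [hv'def, if_pos h1, if_neg h2] at hpq
          exact hcase q (by omega) hpq
        · exfalso
          simp only [hv'def, if_neg h1, if_pos h2] at hpq
          exact hcase p (by omega) hpq.symm
        · simp only [hv'def, if_neg h1, if_neg h2] at hpq
          exact hvinj p q (by omega) (by omega) hpq

end Grow

lemma sparse {X : Type*} [DecidableEq X] (r t : ℕ) (hr : 1 ≤ r)
    (E : Finset (Finset X)) (huniform : ∀ e ∈ E, e.card = r + 1)
    (hnc : ∀ ℓ, 2 ≤ ℓ → ℓ ≤ t → ¬ HasBergeCycle E ℓ) :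
    ∀ n (S : Finset (Finset X)), S.card ≤ n → S ⊆ E → S.Nonempty → S.card ≤ t →
      r * S.card + 1 ≤ (S.biUnion id).card := by
  intro n
  induction n with
  | zero =>
    intro S hSn hSE hne hcardt
    have := Finset.card_pos.2 hne
    omega
  | succ n ihn =>
    intro S hSn hSE hne hcardt
    by_cases h2 : ∀ A ∈ S, 2 ≤ (A ∩ ((S.erase A).biUnion id)).card
    · exfalso
      obtain ⟨A0, hA0⟩ := hne
      obtain ⟨x0, hx0⟩ : A0.Nonempty := by
        rw [← Finset.card_pos, huniform A0 (hSE hA0)]; omega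
      obtain ⟨ℓ, hℓ2, hℓS, hc⟩ := grow S hSE h2 S.card 1 (fun _ => A0) (fun _ => x0)
        le_rfl (by omega) (fun p _ => hA0) (fun p q hp hq _ => by omega)
        (fun p hp => by omega) (fun p q hp hq _ => by omega)
      exact hnc ℓ hℓ2 (le_trans hℓS hcardt) hc
    · push_neg at h2
      obtain ⟨A, hAS, hA1⟩ := h2
      have hA1 : (A ∩ ((S.erase A).biUnion id)).card ≤ 1 := by omega
      rcases (S.erase A).eq_empty_or_nonempty with he | hne'
      · have hsing : S = {A} := by
          rcases (Finset.erase_eq_empty_iff S A).1 he with h | h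
          · exact absurd hAS (by simp [h])
          · exact h
        rw [hsing]
        simp [huniform A (hSE hAS)]
      · have hcarde : (S.erase A).card = S.card - 1 := Finset.card_erase_of_mem hAS
        have h1S : 1 ≤ S.card := Finset.card_pos.2 ⟨A, hAS⟩
        have hU := ihn (S.erase A) (by omega) ((Finset.erase_subset _ _).trans hSE)
          hne' (by omega)
        have hsplit : S.biUnion id = A ∪ (S.erase A).biUnion id := by
          conv_lhs => rw [← Finset.insert_erase hAS]
          rw [Finset.biUnion_insert]
          rfl
        set U := (S.erase A).biUnion id with hUdef
        have hcard2 : (A \ U).card + U.card = (A ∪ U).card := Finset.card_sdiff_add_card A U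
        have hinter : (A ∩ U).card + (A \ U).card = A.card :=
          Finset.card_inter_add_card_sdiff A U
        have hAcard : A.card = r + 1 := huniform A (hSE hAS)
        rw [hsplit, ← hcard2]
        obtain ⟨k, hk⟩ : ∃ k, S.card = k + 1 := ⟨S.card - 1, by omega⟩
        rw [hcarde, hk] at hU
        simp only [Nat.add_sub_cancel] at hU
        rw [hk]
        have : r * (k + 1) = r * k + r := by ring
        omega


/-- In an `(r+1)`-uniform hypergraph, every collection of at most `t` distinct
hyperedges covers at least `rk + 1` vertices (`k` the number of edges) iff the
hypergraph contains no Berge `ℓ`-cycle for any `2 ≤ ℓ ≤ t`. -/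
theorem stmt_9 {X : Type*} [DecidableEq X] (r t : ℕ) (hr : 1 ≤ r) (ht : 2 ≤ t)
    (E : Finset (Finset X)) (huniform : ∀ e ∈ E, e.card = r + 1) :
    (∀ S : Finset (Finset X), S ⊆ E → S.Nonempty → S.card ≤ t →
        r * S.card + 1 ≤ (S.biUnion id).card) ↔
      ∀ ℓ, 2 ≤ ℓ → ℓ ≤ t → ¬ HasBergeCycle E ℓ := by
  constructor
  · rintro h ℓ hℓ2 hℓt ⟨v, e, hvinj, heinj, heE, hcyc⟩
    haveI : NeZero ℓ := ⟨by omega⟩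
    haveI : Fact (1 < ℓ) := ⟨by omega⟩
    set S := Finset.image e Finset.univ with hSdef
    have hSE : S ⊆ E := by
      intro B hB
      obtain ⟨j, _, rfl⟩ := Finset.mem_image.1 hB
      exact heE j
    have hScard : S.card = ℓ := by
      rw [hSdef, Finset.card_image_of_injective _ heinj, Finset.card_univ, ZMod.card]
    have hne : S.Nonempty := by
      rw [← Finset.card_pos, hScard]; omega
    have hle := h S hSE hne (by omega)
    have hone : (1 : ZMod ℓ) ≠ 0 := one_ne_zero
    have hsub : S.biUnion id ⊆ Finset.univ.biUnion (fun i => (e i).erase (v i)) := by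
      intro x hx
      obtain ⟨B, hB, hxB⟩ := Finset.mem_biUnion.1 hx
      obtain ⟨j, _, rfl⟩ := Finset.mem_image.1 hB
      have hxej : x ∈ e j := hxB
      by_cases hxv : x = v j
      · subst hxv
        refine Finset.mem_biUnion.2 ⟨j + 1, Finset.mem_univ _, ?_⟩
        refine Finset.mem_erase.2 ⟨?_, ?_⟩
        · intro hcon
          have : j = j + 1 := hvinj hcon
          exact hone (left_eq_add.mp this)
        · have := (hcyc (j + 1)).1
          rwa [add_sub_cancel_right] at this
      · exact Finset.mem_biUnion.2 ⟨j, Finset.mem_univ _,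
          Finset.mem_erase.2 ⟨hxv, hxej⟩⟩
    have hbound : (S.biUnion id).card ≤ ℓ * r := by
      calc (S.biUnion id).card
          ≤ (Finset.univ.biUnion (fun i => (e i).erase (v i))).card :=
            Finset.card_le_card hsub
        _ ≤ ∑ i : ZMod ℓ, ((e i).erase (v i)).card := Finset.card_biUnion_le
        _ = ∑ i : ZMod ℓ, r := by
            refine Finset.sum_congr rfl fun i _ => ?_
            rw [Finset.card_erase_of_mem (hcyc i).2, huniform _ (heE i)]
            omega
        _ = ℓ * r := by
            rw [Finset.sum_const, Finset.card_univ, ZMod.card, smul_eq_mul]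
    rw [hScard] at hle
    have : r * ℓ = ℓ * r := Nat.mul_comm r ℓ
    omega
  · intro hnc S hSE hne hcardt
    exact sparse r t hr E huniform hnc S.card S le_rfl hSE hne hcardt
end

section
/- Let q be a prime power, d ≥ 5, r ≥ d-2, m ≥ 1, t = ⌊(d-1)/2⌋, and suppose A_1, ..., A_m ⊆ F_q each have size r+1 and satisfy |∪_{i∈S} A_i| ≥ r|S| + 1 for all S ⊆ {1,...,m} with |S| ≤ t. Let C ⊆ F_q^{m(r+1)} be the kernel of the matrix H whose columns (indexed by (i,j), 1 ≤ i ≤ m, 1 ≤ j ≤ r+1) are (e_i, a_{i,j}, ..., a_{i,j}^{d-2})^T. Then C has minimum Hamming distance at least d. -/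
/-- If the sets `A_i` satisfy the covering condition up to `t = ⌊(d-1)/2⌋`,
then the code defined as the kernel of the Vandermonde-structured parity-check
matrix `H` has minimum Hamming distance at least `d`. -/
theorem stmt_16 {F : Type*} [Field F] [Fintype F] [DecidableEq F]
    (d r m : ℕ) (hd : 5 ≤ d) (hr : d - 2 ≤ r) (hm : 0 < m)
    (a : Fin m → Fin (r + 1) → F)
    (hinj : ∀ i, Function.Injective (a i))
    (hcover : ∀ S : Finset (Fin m), S.Nonempty → S.card ≤ (d - 1) / 2 →
      r * S.card + 1 ≤ (S.biUnion (fun i => Finset.univ.image (a i))).card)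
    (H : Matrix (Fin m ⊕ Fin (d - 2)) (Fin m × Fin (r + 1)) F)
    (hH : ∀ p, (fun rw => H rw p) = Sum.elim
      (fun i => if i = p.1 then (1 : F) else 0)
      (fun (l : Fin (d - 2)) => a p.1 p.2 ^ ((l : ℕ) + 1))) :
    ∀ x : Fin m × Fin (r + 1) → F, H.mulVec x = 0 → x ≠ 0 →
      d ≤ (Finset.univ.filter (fun p => x p ≠ 0)).card := by
  classical
  intro x hx hx0
  by_contra hlt
  push_neg at hlt
  set T : Finset (Fin m × Fin (r + 1)) := Finset.univ.filter (fun p => x p ≠ 0) with hTdef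
  have hTmem : ∀ p, p ∈ T ↔ x p ≠ 0 := by
    intro p; simp [hTdef]
  have hHe : ∀ rw p, H rw p = Sum.elim
      (fun i => if i = p.1 then (1 : F) else 0)
      (fun (l : Fin (d - 2)) => a p.1 p.2 ^ ((l : ℕ) + 1)) rw :=
    fun rw p => congrFun (hH p) rw
  have hrow : ∀ rw, (∑ p, H rw p * x p) = 0 := by
    intro rw
    have := congrFun hx rw
    simpa [Matrix.mulVec, dotProduct] using this
  -- restrict sums to the support
  have hsumT : ∀ g : Fin m × Fin (r + 1) → F,
      (∑ p, x p * g p) = ∑ p ∈ T, x p * g p := by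
    intro g
    symm
    apply Finset.sum_subset (Finset.subset_univ T)
    intro p _ hp
    have h0 : x p = 0 := by
      by_contra h; exact hp ((hTmem p).mpr h)
    rw [h0, zero_mul]
  -- top row equations, restricted to fibers over blocks
  have htop : ∀ i : Fin m, (∑ p ∈ T.filter (fun p => p.1 = i), x p) = 0 := by
    intro i
    have h0 := hrow (Sum.inl i)
    have h1 : (∑ p, x p * (if i = p.1 then (1 : F) else 0)) = 0 := by
      calc (∑ p, x p * (if i = p.1 then (1 : F) else 0))
          = ∑ p, H (Sum.inl i) p * x p := by
            refine Finset.sum_congr rfl fun p _ => ?_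
            rw [hHe (Sum.inl i) p]; simp [mul_comm]
        _ = 0 := h0
    rw [hsumT] at h1
    rw [← h1, Finset.sum_filter]
    refine Finset.sum_congr rfl fun p _ => ?_
    by_cases h : i = p.1
    · simp [h]
    · have h' : ¬ p.1 = i := fun hh => h hh.symm
      rw [if_neg h', if_neg h, mul_zero]
  -- bottom row equations
  have hbot : ∀ l : ℕ, 1 ≤ l → l ≤ d - 2 →
      (∑ p ∈ T, x p * a p.1 p.2 ^ l) = 0 := by
    intro l hl1 hl2
    have hld : l - 1 < d - 2 := by omega
    have h0 := hrow (Sum.inr ⟨l - 1, hld⟩)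
    have h1 : (∑ p, x p * a p.1 p.2 ^ l) = 0 := by
      calc (∑ p, x p * a p.1 p.2 ^ l)
          = ∑ p, H (Sum.inr ⟨l - 1, hld⟩) p * x p := by
            refine Finset.sum_congr rfl fun p _ => ?_
            rw [hHe (Sum.inr ⟨l - 1, hld⟩) p]
            have hll : l - 1 + 1 = l := by omega
            simp [hll, mul_comm]
        _ = 0 := h0
    rw [hsumT] at h1; exact h1
  -- the set of blocks
  set S : Finset (Fin m) := T.image Prod.fst with hSdef
  have hTfst : ∀ p ∈ T, p.1 ∈ S := fun p hp => Finset.mem_image_of_mem _ hp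
  -- each block fiber has at least two elements
  have hblock2 : ∀ i ∈ S, 2 ≤ (T.filter (fun p => p.1 = i)).card := by
    intro i hi
    obtain ⟨p, hp, hpi⟩ := Finset.mem_image.mp hi
    have hpmem : p ∈ T.filter (fun p => p.1 = i) := Finset.mem_filter.mpr ⟨hp, hpi⟩
    by_contra hc
    push_neg at hc
    interval_cases h : (T.filter (fun p => p.1 = i)).card
    · exact absurd (Finset.card_eq_zero.mp h ▸ hpmem) (Finset.notMem_empty p)
    · obtain ⟨q, hq⟩ := Finset.card_eq_one.mp h
      have hpq : p = q := by simpa [hq] using hpmem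
      have := htop i
      rw [hq, Finset.sum_singleton] at this
      exact (hTmem q).mp (hpq ▸ hp) this
  have hTcard : T.card = ∑ i ∈ S, (T.filter (fun p => p.1 = i)).card :=
    Finset.card_eq_sum_card_fiberwise hTfst
  have hTS : 2 * S.card ≤ T.card := by
    rw [hTcard]
    calc 2 * S.card = ∑ _i ∈ S, 2 := by rw [Finset.sum_const, smul_eq_mul, mul_comm]
    _ ≤ _ := Finset.sum_le_sum hblock2
  have hSne : S.Nonempty := by
    obtain ⟨p, hp⟩ : T.Nonempty := by
      rcases Function.ne_iff.mp hx0 with ⟨p, hp⟩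
      exact ⟨p, (hTmem p).mpr (by simpa using hp)⟩
    exact ⟨p.1, hTfst p hp⟩
  have hScard : S.card ≤ (d - 1) / 2 := by
    rw [Nat.le_div_iff_mul_le (by norm_num)]
    omega
  set U : Finset F := S.biUnion (fun i => Finset.univ.image (a i)) with hUdef
  have hU : r * S.card + 1 ≤ U.card := hcover S hSne hScard
  -- values of the support and the fiber sums
  set V : Finset F := T.image (fun p => a p.1 p.2) with hVdef
  set y : F → F := fun α => ∑ p ∈ T.filter (fun p => a p.1 p.2 = α), x p with hydef
  have hgroup : ∀ g : F → F,
      (∑ α ∈ V, y α * g α) = ∑ p ∈ T, x p * g (a p.1 p.2) := by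
    intro g
    have hmaps : ∀ p ∈ T, a p.1 p.2 ∈ V := fun p hp => Finset.mem_image_of_mem _ hp
    rw [← Finset.sum_fiberwise_of_maps_to hmaps (fun p => x p * g (a p.1 p.2))]
    refine Finset.sum_congr rfl fun α _ => ?_
    have hyα : y α = ∑ p ∈ T.filter (fun p => a p.1 p.2 = α), x p := rfl
    rw [hyα, Finset.sum_mul]
    refine Finset.sum_congr rfl fun p hp => ?_
    rw [(Finset.mem_filter.mp hp).2]
  -- power sums vanish for exponents 0 .. V.card - 1
  have hVT : V.card ≤ T.card := Finset.card_image_le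
  have hpow : ∀ l : ℕ, l < V.card → (∑ α ∈ V, y α * α ^ l) = 0 := by
    intro l hl
    rcases Nat.eq_zero_or_pos l with hl0 | hl1
    · subst hl0
      have h1 : (∑ α ∈ V, y α * 1) = ∑ p ∈ T, x p * 1 := hgroup (fun _ => (1 : F))
      simp only [mul_one] at h1
      have h2 : (∑ p ∈ T, x p) = 0 := by
        rw [← Finset.sum_fiberwise_of_maps_to hTfst (fun p => x p)]
        exact Finset.sum_eq_zero fun i _ => htop i
      simp only [pow_zero, mul_one]
      rw [h1, h2]
    · have h1 : (∑ α ∈ V, y α * α ^ l) = ∑ p ∈ T, x p * a p.1 p.2 ^ l :=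
        hgroup (fun α => α ^ l)
      rw [h1]
      exact hbot l hl1 (by omega)
  -- Vandermonde: all fiber sums vanish
  have hy0 : ∀ α ∈ V, y α = 0 := by
    set n := V.card with hn
    set e : {α // α ∈ V} ≃ Fin n := V.equivFin with he
    set v : Fin n → F := fun k => (e.symm k : F) with hv
    have hvinj : Function.Injective v :=
      fun k k' h => e.symm.injective (Subtype.ext h)
    have hsum : ∀ G : F → F, (∑ k : Fin n, G (v k)) = ∑ α ∈ V, G α := by
      intro G
      rw [← Finset.sum_coe_sort V G]
      exact Fintype.sum_equiv e.symm _ _ (fun k => rfl)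
    have key : (fun k => y (v k)) = 0 := by
      apply Matrix.eq_zero_of_forall_pow_sum_mul_pow_eq_zero hvinj
      intro i
      rw [hsum (fun α => y α * α ^ (i : ℕ))]
      exact hpow i i.2
    intro α hα
    have : y (v (e ⟨α, hα⟩)) = 0 := congrFun key (e ⟨α, hα⟩)
    simpa [hv, Equiv.symm_apply_apply] using this
  -- each value fiber has ≥ 2 entries
  have hfiber2 : ∀ α ∈ V, 2 ≤ (T.filter (fun p => a p.1 p.2 = α)).card := by
    intro α hα
    obtain ⟨p, hp, hpa⟩ := Finset.mem_image.mp hα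
    have hpmem : p ∈ T.filter (fun p => a p.1 p.2 = α) := Finset.mem_filter.mpr ⟨hp, hpa⟩
    by_contra hc
    push_neg at hc
    interval_cases h : (T.filter (fun p => a p.1 p.2 = α)).card
    · exact absurd (Finset.card_eq_zero.mp h ▸ hpmem) (Finset.notMem_empty p)
    · obtain ⟨q, hq⟩ := Finset.card_eq_one.mp h
      have hpq : p = q := by simpa [hq] using hpmem
      have hyα : (∑ p ∈ T.filter (fun p => a p.1 p.2 = α), x p) = 0 := hy0 α hα
      rw [hq, Finset.sum_singleton] at hyα
      exact (hTmem q).mp (hpq ▸ hp) hyα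
  -- multiplicity of a value among the blocks of S
  set mult : F → ℕ := fun α => (S.filter (fun i => α ∈ Finset.univ.image (a i))).card
    with hmult
  -- value fibers inject into blocks containing the value
  have hfibmult : ∀ α ∈ V, (T.filter (fun p => a p.1 p.2 = α)).card ≤ mult α := by
    intro α _
    apply Finset.card_le_card_of_injOn Prod.fst
    · intro p hp
      rcases Finset.mem_filter.mp hp with ⟨hpT, hpa⟩
      exact Finset.mem_filter.mpr ⟨hTfst p hpT,
        Finset.mem_image.mpr ⟨p.2, Finset.mem_univ _, hpa⟩⟩
    · intro p hp q hq hfst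
      rcases Finset.mem_filter.mp (Finset.mem_coe.mp hp) with ⟨_, hpa⟩
      rcases Finset.mem_filter.mp (Finset.mem_coe.mp hq) with ⟨_, hqa⟩
      have : a p.1 p.2 = a p.1 q.2 := by rw [hpa, hfst, hqa]
      exact Prod.ext hfst (hinj p.1 this)
  have hVsub : V ⊆ U := by
    intro α hα
    obtain ⟨p, hp, hpa⟩ := Finset.mem_image.mp hα
    rw [hUdef]
    exact Finset.mem_biUnion.mpr ⟨p.1, hTfst p hp,
      Finset.mem_image.mpr ⟨p.2, Finset.mem_univ _, hpa⟩⟩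
  -- total multiplicity over U
  have hmultsum : (∑ α ∈ U, mult α) = S.card * (r + 1) := by
    have : (∑ α ∈ U, mult α) = ∑ i ∈ S, (U.filter (fun α => α ∈ Finset.univ.image (a i))).card := by
      simp only [hmult, Finset.card_filter]
      rw [Finset.sum_comm]
    have hAi : ∀ i ∈ S, (U.filter (fun α => α ∈ Finset.univ.image (a i))).card = r + 1 := by
      intro i hi
      have hsub : Finset.univ.image (a i) ⊆ U := by
        rw [hUdef]; exact Finset.subset_biUnion_of_mem (fun i => Finset.univ.image (a i)) hi
      rw [Finset.filter_mem_eq_inter, Finset.inter_eq_right.mpr hsub,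
        Finset.card_image_of_injective _ (hinj i), Finset.card_univ, Fintype.card_fin]
    rw [this, Finset.sum_congr rfl hAi, Finset.sum_const, smul_eq_mul]
  have hmult1 : ∀ α ∈ U, 1 ≤ mult α := by
    intro α hα
    obtain ⟨i, hi, hia⟩ := Finset.mem_biUnion.mp hα
    exact Finset.card_pos.mpr ⟨i, Finset.mem_filter.mpr ⟨hi, hia⟩⟩
  -- key counting inequalities
  have f4 : T.card ≤ ∑ α ∈ V, mult α := by
    rw [Finset.card_eq_sum_card_fiberwise
      (f := fun p => a p.1 p.2) (fun p hp => Finset.mem_image_of_mem _ hp)]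
    exact Finset.sum_le_sum hfibmult
  have f5 : 2 * V.card ≤ ∑ α ∈ V, mult α := by
    calc 2 * V.card = ∑ _α ∈ V, 2 := by rw [Finset.sum_const, smul_eq_mul, mul_comm]
    _ ≤ _ := Finset.sum_le_sum (fun α hα => le_trans (hfiber2 α hα) (hfibmult α hα))
  have f6 : (∑ α ∈ V, mult α) + (U.card - V.card) ≤ ∑ α ∈ U, mult α := by
    rw [← Finset.sum_sdiff hVsub, ← Finset.card_sdiff_of_subset hVsub]
    have : (U \ V).card ≤ ∑ α ∈ U \ V, mult α := by
      rw [Finset.card_eq_sum_ones]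
      exact Finset.sum_le_sum (fun α hα => hmult1 α (Finset.mem_sdiff.mp hα).1)
    omega
  have f7 : V.card ≤ U.card := Finset.card_le_card hVsub
  have hSU : S.card * (r + 1) = r * S.card + S.card := by ring
  have hS1 : 1 ≤ S.card := Finset.card_pos.mpr hSne
  omega
end

section
/- Let a ≥ 2, r ≥ 1, q ≥ 10 a^2 (r+1)^2. Then Σ_{i=a}^{a(r+1)} C(a(r+1), i) (a(r+1)/q)^i ≤ (1.1/a!) (a^2(r+1)^2/q)^a, where C(n,k) denotes the binomial coefficient. -/
lemma geom_aux (x : ℝ) (h0 : 0 ≤ x) (h1 : x < 1) (m : ℕ) :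
    ∑ k ∈ Finset.range m, x ^ k ≤ 1 / (1 - x) := by
  have hx : x ≠ 1 := ne_of_lt h1
  rw [geom_sum_eq hx]
  rw [show (x ^ m - 1)/(x - 1) = (1 - x ^ m)/(1 - x) by rw [← neg_div_neg_eq]; ring_nf]
  rw [div_le_div_iff₀ (by linarith) (by linarith)]
  have : x ^ m ≥ 0 := pow_nonneg h0 m
  nlinarith

/-- The tail bound used in the probabilistic construction:
`Σ_{i=a}^{a(r+1)} C(a(r+1), i) (a(r+1)/q)^i ≤ (1.1/a!) (a²(r+1)²/q)^a`. -/
theorem stmt_18 (a r q : ℕ) (ha : 2 ≤ a) (hr : 1 ≤ r)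
    (hq : 10 * a ^ 2 * (r + 1) ^ 2 ≤ q) :
    ∑ i ∈ Finset.Icc a (a * (r + 1)),
        ((a * (r + 1)).choose i : ℝ) * (((a : ℝ) * (r + 1)) / q) ^ i ≤
      (1.1 / (a.factorial : ℝ)) *
        (((a : ℝ) ^ 2 * ((r : ℝ) + 1) ^ 2) / q) ^ a := by
  have hq' : (10 : ℝ) * a ^ 2 * (r + 1) ^ 2 ≤ q := by exact_mod_cast hq
  have haR : (2 : ℝ) ≤ a := by exact_mod_cast ha
  have hrR : (1 : ℝ) ≤ r := by exact_mod_cast hr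
  have hqpos : (0 : ℝ) < q := by
    have ha0 : 0 < a := by omega
    have : 0 < 10 * a ^ 2 * (r + 1) ^ 2 :=
      Nat.mul_pos (Nat.mul_pos (by norm_num) (pow_pos ha0 2)) (pow_pos (Nat.succ_pos r) 2)
    exact_mod_cast lt_of_lt_of_le this hq
  set n := a * (r + 1) with hn
  have hnR : ((n : ℝ)) = (a : ℝ) * ((r : ℝ) + 1) := by push_cast [hn]; ring
  set x : ℝ := ((a : ℝ) ^ 2 * ((r : ℝ) + 1) ^ 2) / q with hx
  have hxnn : 0 ≤ x := by positivity
  have hx10 : x ≤ 1 / 10 := by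
    rw [hx, div_le_div_iff₀ hqpos (by norm_num)]; nlinarith
  have hapos : (0:ℝ) < a := by linarith
  have hxa : x / a ≤ 1 / 20 := by
    rw [div_le_div_iff₀ hapos (by norm_num)]; nlinarith
  have hfa : (0:ℝ) < a.factorial := by exact_mod_cast a.factorial_pos
  have key : ∀ i ∈ Finset.Icc a n,
      ((n.choose i : ℝ)) * (((a : ℝ) * (r + 1)) / q) ^ i ≤
        x ^ a / a.factorial * (1/20) ^ (i - a) := by
    intro i hi
    rw [Finset.mem_Icc] at hi
    obtain ⟨hai, hin⟩ := hi
    have hfact : (a.factorial : ℝ) * (a : ℝ) ^ (i - a) ≤ (i.factorial : ℝ) := by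
      have h1 := Nat.factorial_mul_pow_le_factorial (m := a) (n := i - a)
      have h2 : a.factorial * a ^ (i - a) ≤ (a + (i - a)).factorial := by
        calc a.factorial * a ^ (i - a) ≤ a.factorial * (a+1) ^ (i - a) :=
          Nat.mul_le_mul_left _ (Nat.pow_le_pow_left (Nat.le_succ _) _)
        _ ≤ _ := h1
      rw [Nat.add_sub_cancel' hai] at h2
      exact_mod_cast h2
    have hchoose : ((n.choose i : ℝ)) ≤ (n : ℝ) ^ i / i.factorial :=
      Nat.choose_le_pow_div i n
    have hfpos : (0 : ℝ) < i.factorial := by exact_mod_cast i.factorial_pos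
    have hterm : ((n.choose i : ℝ)) * (((a : ℝ) * (r + 1)) / q) ^ i ≤ x ^ i / i.factorial := by
      calc ((n.choose i : ℝ)) * (((a : ℝ) * (r + 1)) / q) ^ i
          ≤ (n : ℝ) ^ i / i.factorial * (((a : ℝ) * (r + 1)) / q) ^ i := by
            apply mul_le_mul_of_nonneg_right hchoose (by positivity)
        _ = x ^ i / i.factorial := by
            have hxpow : x ^ i = ((a:ℝ)*((r:ℝ)+1)) ^ i * (((a:ℝ)*((r:ℝ)+1))/(q:ℝ)) ^ i := by
              rw [hx, show (a:ℝ)^2*((r:ℝ)+1)^2 = ((a:ℝ)*((r:ℝ)+1))^2 from by ring,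
                div_pow, ← pow_mul, two_mul, pow_add, mul_div_assoc, div_pow]
            rw [hnR, hxpow]; ring
    refine hterm.trans ?_
    have hxi : x ^ i = x ^ a * x ^ (i - a) := by
      rw [← pow_add, Nat.add_sub_cancel' hai]
    calc x ^ i / i.factorial ≤ x ^ i / (a.factorial * (a:ℝ) ^ (i - a)) := by
          apply div_le_div_of_nonneg_left (by positivity) (by positivity) hfact
      _ = x ^ a / a.factorial * (x / a) ^ (i - a) := by
          rw [hxi, mul_div_mul_comm, ← div_pow]
      _ ≤ x ^ a / a.factorial * (1/20) ^ (i - a) := by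
          apply mul_le_mul_of_nonneg_left _ (by positivity)
          exact pow_le_pow_left₀ (by positivity) hxa _
  calc ∑ i ∈ Finset.Icc a n, ((n.choose i : ℝ)) * (((a : ℝ) * (r + 1)) / q) ^ i
      ≤ ∑ i ∈ Finset.Icc a n, x ^ a / a.factorial * (1/20) ^ (i - a) :=
        Finset.sum_le_sum key
    _ = x ^ a / a.factorial * ∑ i ∈ Finset.Icc a n, ((1:ℝ)/20) ^ (i - a) := by
        rw [Finset.mul_sum]
    _ ≤ x ^ a / a.factorial * (1 / (1 - 1/20)) := by
        apply mul_le_mul_of_nonneg_left _ (by positivity)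
        rw [← Finset.Ico_add_one_right_eq_Icc, Finset.sum_Ico_eq_sum_range]
        calc ∑ k ∈ Finset.range (n + 1 - a), ((1:ℝ)/20) ^ (a + k - a)
            = ∑ k ∈ Finset.range (n + 1 - a), ((1:ℝ)/20) ^ k := by
              apply Finset.sum_congr rfl; intro k _; rw [Nat.add_sub_cancel_left]
          _ ≤ 1 / (1 - 1/20) := geom_aux _ (by norm_num) (by norm_num) _
    _ ≤ x ^ a / a.factorial * 1.1 := by
        apply mul_le_mul_of_nonneg_left (by norm_num) (by positivity)
    _ = (1.1 / (a.factorial : ℝ)) * x ^ a := by ring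
    _ = (1.1 / (a.factorial : ℝ)) * (((a : ℝ) ^ 2 * ((r : ℝ) + 1) ^ 2) / q) ^ a := rfl
end
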